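/- Let p be a prime and G a finite solvable group with |G| = p^n · m where gcd(p, m) = 1. Suppose N is a normal subgroup of G of order p^n (a normal p-Sylow subgroup). Then there exists a subgroup R of G of order m with G = N·R, and G is the (internal) semidirect product of N and R. -/
import Mathlib


/-- Hall/Schur–Zassenhaus for a normal Sylow subgroup: if `G` is a
finite solvable group of order `p^n · m` with `gcd(p, m) = 1` and `N ⊴ G` has
order `p^n`, then there is a subgroup `R ≤ G` of order `m` with `G = N·R` and
`N ∩ R = 1`, i.e. `G` is the internal semidirect product of `N` and `R`. -/
theorem normal_sylow_has_complement (p n m : ℕ) (hp : p.Prime) (hpm : Nat.gcd p m = 1)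
    (G : Type*) [Group G] [Finite G] (hsolv : IsSolvable G)
    (hG : Nat.card G = p ^ n * m)
    (N : Subgroup G) [N.Normal] (hN : Nat.card N = p ^ n) :
    ∃ R : Subgroup G, Nat.card R = m ∧ N ⊔ R = ⊤ ∧ N ⊓ R = ⊥ := by
  have hpn : 0 < p ^ n := pow_pos hp.pos n
  have hidx : N.index = m := by
    have := N.card_mul_index
    rw [hN, hG] at this
    exact Nat.eq_of_mul_eq_mul_left hpn this.symm ▸ rfl
  have hcop : Nat.Coprime (Nat.card N) N.index := by
    rw [hN, hidx]
    exact Nat.Coprime.pow_left n hpm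
  obtain ⟨R, hR⟩ := Subgroup.exists_right_complement'_of_coprime hcop
  refine ⟨R, ?_, hR.sup_eq_top, hR.disjoint.eq_bot⟩
  have := hR.card_mul
  rw [hN, hG] at this
  exact Nat.eq_of_mul_eq_mul_left hpn this
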